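/- arXiv:1508.03275 — 3 statements merged into one kernel-verified Lean document; each statement's English description precedes it below -/
import Mathlib

section
/- A nonzero atomless Banach lattice E with order continuous norm cannot admit a residually quasi-monotone FDD: there is no sequence (Pₙ)_{n∈ℕ} of continuous finite-rank linear projections on E with Pₙ ∘ Pₘ = P_{min(n,m)} for all n, m and Pₙ x → x in norm for every x ∈ E, for which there exists a constant M > 0 such that for all x, y ∈ E with |x| ≤ |y| and all n, ‖x − Pₙ x‖ ≤ M ‖y − Pₙ y‖. -/
open Filter Set

/-- A directed preorder-like index set for nets, given by a relation `r`. -/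
def IsNetIndex (ι : Type*) (r : ι → ι → Prop) : Prop :=
  Nonempty ι ∧ Reflexive r ∧ Transitive r ∧ ∀ a b, ∃ c, r a c ∧ r b c

/-- An element `e > 0` of a lattice-ordered group is an atom if any two disjoint
elements of `[0, e]` cannot both be nonzero. -/
def IsLatticeAtom {E : Type*} [Lattice E] [AddCommGroup E] (e : E) : Prop :=
  0 < e ∧ ∀ f₁ f₂ : E, 0 ≤ f₁ → f₁ ≤ e → 0 ≤ f₂ → f₂ ≤ e → f₁ ⊓ f₂ = 0 → f₁ = 0 ∨ f₂ = 0

/-- A normed lattice has order continuous norm if every decreasing net with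
infimum `0` converges to `0` in norm. -/
def OrderContinuousNorm (E : Type*) [NormedAddCommGroup E] [Lattice E] [HasSolidNorm E]
    [IsOrderedAddMonoid E] : Prop :=
  ∀ (ι : Type) (r : ι → ι → Prop), IsNetIndex ι r →
    ∀ e : ι → E, (∀ a b : ι, r a b → e b ≤ e a) → IsGLB (Set.range e) 0 →
      ∀ ε : ℝ, 0 < ε → ∃ α₀ : ι, ∀ α : ι, r α₀ α → ‖e α‖ < ε

section Aux

variable {E : Type*} [NormedAddCommGroup E] [Lattice E] [HasSolidNorm E] [IsOrderedAddMonoid E]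

/-- Disjointness is preserved by addition in a lattice-ordered group. -/
lemma aux_disj_add {a b c : E} (ha : 0 ≤ a) (hb : 0 ≤ b) (hc : 0 ≤ c)
    (hab : a ⊓ b = 0) (hac : a ⊓ c = 0) : a ⊓ (b + c) = 0 := by
  have h1 : a ⊓ (b + c) ≤ (a + c) ⊓ (b + c) :=
    inf_le_inf_right _ (le_add_of_nonneg_right hc)
  have h2 : (a + c) ⊓ (b + c) = (a ⊓ b) + c := (inf_add _ _ _).symm
  have h3 : a ⊓ (b + c) ≤ c := by
    rw [h2, hab, zero_add] at h1; exact h1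
  have h4 : a ⊓ (b + c) ≤ a ⊓ c := le_inf inf_le_left h3
  exact le_antisymm (h4.trans_eq hac) (le_inf ha (add_nonneg hb hc))

lemma aux_disj_nsmul {a b : E} (ha : 0 ≤ a) (hb : 0 ≤ b) (hab : a ⊓ b = 0) :
    ∀ n : ℕ, a ⊓ (n • b) = 0 := by
  intro n
  induction n with
  | zero => simpa using inf_eq_right.2 ha
  | succ n ih =>
      rw [succ_nsmul]
      exact aux_disj_add ha (nsmul_nonneg hb n) hb ih hab

/-- Lattice-ordered groups: if `n • y ≥ 0` with `n > 0` then `y ≥ 0`. -/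
lemma aux_nsmul_nonneg_imp {y : E} {n : ℕ} (hn : 0 < n) (h : 0 ≤ n • y) : 0 ≤ y := by
  have hpn : 0 ≤ (y⁺ : E) := posPart_nonneg y
  have hnn : 0 ≤ (y⁻ : E) := negPart_nonneg y
  have hdisj : (y⁺ : E) ⊓ y⁻ = 0 := posPart_inf_negPart_eq_zero y
  have hy : y⁺ - y⁻ = y := posPart_sub_negPart y
  have hle : n • (y⁻ : E) ≤ n • y⁺ := by
    have : n • y = n • (y⁺ : E) - n • y⁻ := by rw [← smul_sub, hy]
    rw [this] at h
    exact sub_nonneg.1 h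
  have hdisj2 : (n • (y⁻ : E)) ⊓ (n • (y⁺ : E)) = 0 := by
    have h1 : (y⁻ : E) ⊓ (n • (y⁺ : E)) = 0 :=
      aux_disj_nsmul hnn hpn (by rw [inf_comm]; exact hdisj) n
    have h2 : (n • (y⁺ : E)) ⊓ y⁻ = 0 := by rw [inf_comm]; exact h1
    rw [inf_comm]
    exact aux_disj_nsmul (nsmul_nonneg hpn n) hnn h2 n
  have hzero : n • (y⁻ : E) = 0 := by
    have := inf_eq_left.2 hle
    rw [this] at hdisj2; exact hdisj2
  have hylez : (y⁻ : E) ≤ 0 := by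
    obtain ⟨m, rfl⟩ := Nat.exists_eq_succ_of_ne_zero hn.ne'
    calc (y⁻ : E) ≤ y⁻ + m • y⁻ := le_add_of_nonneg_right (nsmul_nonneg hnn m)
      _ = (m + 1) • (y⁻ : E) := by rw [add_comm, succ_nsmul]
      _ = 0 := hzero
  have : (y⁻ : E) = 0 := le_antisymm hylez hnn
  exact negPart_eq_zero.1 this

variable [NormedSpace ℝ E]

/-- Nonnegative rational scalars preserve positivity. -/
lemma aux_rat_smul_nonneg {x : E} (hx : 0 ≤ x) (q : ℚ) (hq : 0 ≤ q) :
    0 ≤ (q : ℝ) • x := by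
  apply aux_nsmul_nonneg_imp q.pos
  have key : (q.den : ℕ) • ((q : ℝ) • x) = q.num.toNat • x := by
    rw [← Nat.cast_smul_eq_nsmul ℝ, ← Nat.cast_smul_eq_nsmul ℝ, smul_smul]
    congr 1
    have hden : (q.den : ℝ) ≠ 0 := Nat.cast_ne_zero.2 q.den_nz
    have hcast : (q : ℝ) = (q.num : ℝ) / (q.den : ℝ) := by
      rw [Rat.cast_def]
    have hnum : ((q.num.toNat : ℕ) : ℝ) = (q.num : ℝ) := by
      exact_mod_cast congrArg (Int.cast : ℤ → ℝ) (Int.toNat_of_nonneg (Rat.num_nonneg.2 hq))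
    rw [hcast, hnum]
    field_simp
  rw [key]
  exact nsmul_nonneg hx _

/-- Nonnegative real scalars preserve positivity (using density of rationals
and closedness of the positive cone). -/
lemma aux_smul_nonneg {c : ℝ} {x : E} (hc : 0 ≤ c) (hx : 0 ≤ x) : 0 ≤ c • x := by
  have hq : ∀ m : ℕ, ∃ q : ℚ, c < (q : ℝ) ∧ (q : ℝ) < c + 1 / (m + 1) := by
    intro m
    have h1 : (0:ℝ) < 1 / (m + 1) := by positivity
    exact exists_rat_btwn (by linarith)
  choose q hq1 hq2 using hq
  have htend : Tendsto (fun m : ℕ => ((q m : ℝ))) atTop (nhds c) := by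
    have h0 : Tendsto (fun m : ℕ => c + 1 / (m + 1 : ℝ)) atTop (nhds c) := by
      have : Tendsto (fun n : ℕ => 1 / ((n : ℝ) + 1)) atTop (nhds 0) :=
        tendsto_one_div_add_atTop_nhds_zero_nat
      simpa using (tendsto_const_nhds (x := c)).add this
    exact tendsto_of_tendsto_of_tendsto_of_le_of_le tendsto_const_nhds h0
      (fun m => (hq1 m).le) (fun m => (hq2 m).le)
  have htend2 : Tendsto (fun m : ℕ => ((q m : ℝ)) • x) atTop (nhds (c • x)) :=
    htend.smul_const x
  have hmem : ∀ m, ((q m : ℝ)) • x ∈ Ici (0 : E) := by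
    intro m
    have : (0 : ℚ) ≤ q m := by
      have : (0 : ℝ) < (q m : ℝ) := lt_of_le_of_lt hc (hq1 m)
      exact_mod_cast this.le
    exact aux_rat_smul_nonneg hx (q m) this
  exact isClosed_Ici.mem_of_tendsto htend2 (Eventually.of_forall hmem)

lemma aux_smul_mono {c d : ℝ} {x : E} (hcd : c ≤ d) (hx : 0 ≤ x) :
    c • x ≤ d • x := by
  have := aux_smul_nonneg (sub_nonneg.2 hcd) hx
  rw [sub_smul] at this
  exact sub_nonneg.1 this

lemma aux_disj_smul {a b : E} {c : ℝ} (ha : 0 ≤ a) (hb : 0 ≤ b) (hc : 0 ≤ c)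
    (hab : a ⊓ b = 0) : a ⊓ (c • b) = 0 := by
  obtain ⟨m, hm⟩ := exists_nat_ge c
  have h1 : c • b ≤ m • b := by
    rw [← Nat.cast_smul_eq_nsmul ℝ]
    exact aux_smul_mono hm hb
  have h2 : a ⊓ (c • b) ≤ a ⊓ (m • b) := inf_le_inf_left _ h1
  rw [aux_disj_nsmul ha hb hab m] at h2
  exact le_antisymm h2 (le_inf ha (aux_smul_nonneg hc hb))

lemma aux_disj_sum {a : E} (ha : 0 ≤ a) {ι : Type*} (s : Finset ι) (t : ι → E)
    (h : ∀ i ∈ s, 0 ≤ t i ∧ a ⊓ t i = 0) : a ⊓ (∑ i ∈ s, t i) = 0 := by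
  classical
  induction s using Finset.induction with
  | empty => simpa using inf_eq_right.2 ha
  | insert i s hni ih =>
      rw [Finset.sum_insert hni]
      have hts : 0 ≤ ∑ j ∈ s, t j :=
        Finset.sum_nonneg fun j hj => (h j (Finset.mem_insert_of_mem hj)).1
      exact aux_disj_add ha (h i (Finset.mem_insert_self i s)).1 hts
        (h i (Finset.mem_insert_self i s)).2
        (ih fun j hj => h j (Finset.mem_insert_of_mem hj))

/-- Pairwise disjoint nonzero positive vectors are linearly independent. -/
lemma aux_linearIndependent (g : ℕ → E) (hpos : ∀ k, 0 ≤ g k)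
    (hne : ∀ k, g k ≠ 0) (hdisj : ∀ i j, i ≠ j → g i ⊓ g j = 0) :
    LinearIndependent ℝ g := by
  rw [linearIndependent_iff']
  intro s c hsum j hj
  by_contra hc
  have hsum' : c j • g j + ∑ i ∈ s.erase j, c i • g i = 0 := by
    rw [Finset.add_sum_erase s (fun i => c i • g i) hj]; exact hsum
  have hrepr : g j = ∑ i ∈ s.erase j, (-(c i / c j)) • g i := by
    have h1 : g j = (c j)⁻¹ • (c j • g j) := by
      rw [smul_smul, inv_mul_cancel₀ hc, one_smul]
    have h2 : c j • g j = -∑ i ∈ s.erase j, c i • g i :=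
      eq_neg_of_add_eq_zero_left hsum'
    rw [h1, h2, smul_neg, Finset.smul_sum, ← Finset.sum_neg_distrib]
    refine Finset.sum_congr rfl fun i _ => ?_
    rw [smul_smul, ← neg_smul]
    congr 1
    field_simp
  set h : E := ∑ i ∈ s.erase j, |(-(c i / c j))| • g i with hh
  have hle : g j ≤ h := by
    rw [hrepr, hh]
    apply Finset.sum_le_sum
    intro i _
    exact aux_smul_mono (le_abs_self _) (hpos i)
  have hdisjh : g j ⊓ h = 0 := by
    apply aux_disj_sum (hpos j)
    intro i hi
    have hij : i ≠ j := Finset.ne_of_mem_erase hi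
    constructor
    · exact aux_smul_nonneg (abs_nonneg _) (hpos i)
    · exact aux_disj_smul (hpos j) (hpos i) (abs_nonneg _)
        (hdisj j i (Ne.symm hij))
  have : g j = 0 := by
    have := inf_eq_left.2 hle
    rw [this] at hdisjh; exact hdisjh
  exact hne j this

end Aux

/-- A nonzero atomless Banach lattice with order continuous norm admits no
residually quasi-monotone FDD: there is no sequence of continuous finite-rank
projections `P n` with `P n ∘ P m = P (min n m)`, converging pointwise to the
identity, whose residual projections `Id - P n` are uniformly quasi-monotone. -/
theorem no_residuallyQuasiMonotoneFDD
    {E : Type*} [NormedAddCommGroup E] [Lattice E] [HasSolidNorm E] [IsOrderedAddMonoid E]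
    [NormedSpace ℝ E] [CompleteSpace E]
    [Nontrivial E]
    (hatomless : ∀ e : E, ¬ IsLatticeAtom e)
    (hoc : OrderContinuousNorm E) :
    ¬ ∃ (P : ℕ → E →L[ℝ] E) (M : ℝ), 0 < M ∧
        (∀ n m : ℕ, (P n).comp (P m) = P (min n m)) ∧
        (∀ n : ℕ, FiniteDimensional ℝ (LinearMap.range ((P n : E →ₗ[ℝ] E)))) ∧
        (∀ x : E, Tendsto (fun n => P n x) atTop (nhds x)) ∧
        (∀ (x y : E) (n : ℕ), |x| ≤ |y| → ‖x - P n x‖ ≤ M * ‖y - P n y‖) := by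
  rintro ⟨P, M, hM, hcomp, hfin, hconv, hqm⟩
  -- find `n` with `P n x ≠ 0`
  obtain ⟨x, hx⟩ := exists_ne (0 : E)
  have hexists : ∃ n : ℕ, P n x ≠ 0 := by
    by_contra hall
    push_neg at hall
    have : Tendsto (fun n : ℕ => P n x) atTop (nhds 0) := by
      simpa [hall] using tendsto_const_nhds (x := (0 : E))
    exact hx (tendsto_nhds_unique (hconv x) this)
  obtain ⟨n, hn⟩ := hexists
  -- `P n` is a projection
  have hproj : ∀ z : E, P n (P n z) = P n z := by
    intro z
    have := congrArg (fun T : E →L[ℝ] E => T z) (hcomp n n)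
    simpa using this
  set e₀ : E := |P n x| with he₀def
  have he₀nonneg : 0 ≤ e₀ := abs_nonneg _
  have he₀ : 0 < e₀ := by
    refine he₀nonneg.lt_of_ne fun h => hn ?_
    have h2 : ‖P n x‖ = 0 := by
      rw [← norm_abs_eq_norm, ← he₀def, ← h, norm_zero]
    exact norm_eq_zero.1 h2
  -- `e₀` is fixed by `P n`
  have hfix₀ : P n e₀ = e₀ := by
    have h1 : |e₀| ≤ |P n x| := by rw [he₀def, abs_abs]
    have h2 := hqm e₀ (P n x) n h1
    rw [hproj x, sub_self, norm_zero, mul_zero] at h2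
    have := le_antisymm h2 (norm_nonneg _)
    rwa [norm_eq_zero, sub_eq_zero, eq_comm] at this
  -- any `0 ≤ z ≤ e₀` is fixed by `P n`
  have hfix : ∀ z : E, 0 ≤ z → z ≤ e₀ → P n z = z := by
    intro z hz hze
    have h1 : |z| ≤ |e₀| := by
      rw [abs_of_nonneg hz, abs_of_nonneg he₀nonneg]; exact hze
    have h2 := hqm z e₀ n h1
    rw [hfix₀, sub_self, norm_zero, mul_zero] at h2
    have := le_antisymm h2 (norm_nonneg _)
    rwa [norm_eq_zero, sub_eq_zero, eq_comm] at this
  -- the splitting function from atomlessness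
  have hsplit : ∀ e : E, 0 < e → ∃ f₁ f₂ : E, 0 ≤ f₁ ∧ f₁ ≤ e ∧ 0 ≤ f₂ ∧ f₂ ≤ e ∧
      f₁ ⊓ f₂ = 0 ∧ f₁ ≠ 0 ∧ f₂ ≠ 0 := by
    intro e he
    have h := hatomless e
    rw [IsLatticeAtom] at h
    push_neg at h
    obtain ⟨f₁, f₂, h1, h2, h3, h4, h5, h6, h7⟩ := h he
    exact ⟨f₁, f₂, h1, h2, h3, h4, h5, h6, h7⟩
  choose! F1 F2 hF1 hF1e hF2 hF2e hFdisj hF1ne hF2ne using hsplit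
  have hF2pos : ∀ e : E, ∀ he : 0 < e, 0 < F2 e :=
    fun e he => lt_of_le_of_ne (hF2 e he) (Ne.symm (hF2ne e he))
  -- recursive construction of disjoint sequence
  let r : ℕ → {z : E // 0 < z} := fun k =>
    Nat.rec ⟨e₀, he₀⟩ (fun _ p => ⟨F2 p.1, hF2pos p.1 p.2⟩) k
  set g : ℕ → E := fun k => F1 (r k).1 with hg
  have hrsucc : ∀ k, (r (k + 1)).1 = F2 (r k).1 := fun k => rfl
  have hr_le : ∀ k, (r (k + 1)).1 ≤ (r k).1 := by
    intro k; rw [hrsucc]; exact hF2e (r k).1 (r k).2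
  have hr_anti : ∀ i j, i ≤ j → (r j).1 ≤ (r i).1 := by
    intro i j hij
    induction j with
    | zero => simp_all
    | succ j ih =>
        rcases Nat.lt_or_ge i (j + 1) with h | h
        · exact (hr_le j).trans (ih (Nat.lt_succ_iff.1 h))
        · have : i = j + 1 := le_antisymm hij h
          subst this; rfl
  have hr_le_e : ∀ k, (r k).1 ≤ e₀ := fun k => hr_anti 0 k (Nat.zero_le k)
  have hgpos : ∀ k, 0 ≤ g k := fun k => hF1 (r k).1 (r k).2
  have hgle : ∀ k, g k ≤ (r k).1 := fun k => hF1e (r k).1 (r k).2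
  have hgne : ∀ k, g k ≠ 0 := fun k => hF1ne (r k).1 (r k).2
  have hgr : ∀ k, g k ⊓ (r (k + 1)).1 = 0 := by
    intro k; rw [hrsucc]; exact hFdisj (r k).1 (r k).2
  have hgdisj : ∀ i j, i ≠ j → g i ⊓ g j = 0 := by
    have key : ∀ i j, i < j → g i ⊓ g j = 0 := by
      intro i j hij
      have h1 : g j ≤ (r (i + 1)).1 := (hgle j).trans (hr_anti (i + 1) j hij)
      have h2 : g i ⊓ g j ≤ g i ⊓ (r (i + 1)).1 := inf_le_inf_left _ h1
      rw [hgr i] at h2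
      exact le_antisymm h2 (le_inf (hgpos i) (hgpos j))
    intro i j hij
    rcases hij.lt_or_gt with h | h
    · exact key i j h
    · rw [inf_comm]; exact key j i h
  -- all `g k` lie in the range of `P n`
  have hgmem : ∀ k, g k ∈ LinearMap.range ((P n : E →ₗ[ℝ] E)) := by
    intro k
    refine LinearMap.mem_range.2 ⟨g k, ?_⟩
    have := hfix (g k) (hgpos k) ((hgle k).trans (hr_le_e k))
    simpa using this
  -- linear independence contradicts finite-dimensionality
  have hli : LinearIndependent ℝ g := aux_linearIndependent g hgpos hgne hgdisj
  let G : ℕ → ↥(LinearMap.range ((P n : E →ₗ[ℝ] E))) := fun k => ⟨g k, hgmem k⟩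
  have hliG : LinearIndependent ℝ G := by
    apply LinearIndependent.of_comp (LinearMap.range ((P n : E →ₗ[ℝ] E))).subtype
    convert hli
    rfl
  haveI := hfin n
  haveI : Finite ℕ := hliG.finite
  exact not_finite ℕ
end

section
/- Let (Ω, Σ, μ) be a σ-finite atomless measure space, X a Banach space, 1 ≤ p < ∞ and F a finite dimensional normed space. Then every norm-continuous linear operator T : Lp(μ, X) → F is narrow: for every f ∈ Lp(μ, X) and every ε > 0 there exists a measurable set A ∈ Σ such that ‖T(1_A f) − T(1_{Ω∖A} f)‖ < ε. -/
open MeasureTheory Filter Set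
open scoped ENNReal

/-- A measure is atomless if every measurable set of positive measure has a
measurable subset of strictly smaller positive measure. -/
def MeasureAtomless {Ω : Type*} [MeasurableSpace Ω] (μ : Measure Ω) : Prop :=
  ∀ A : Set Ω, MeasurableSet A → 0 < μ A →
    ∃ B : Set Ω, B ⊆ A ∧ MeasurableSet B ∧ 0 < μ B ∧ μ B < μ A

/-- The restriction `1_A • f` of `f ∈ Lp(μ, X)` to a measurable set `A`. -/
noncomputable def restrictLp {Ω X : Type*} [MeasurableSpace Ω] {μ : Measure Ω}
    {p : ℝ≥0∞} [NormedAddCommGroup X] (f : Lp X p μ) {A : Set Ω}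
    (hA : MeasurableSet A) : Lp X p μ :=
  ((Lp.memLp f).indicator hA).toLp (A.indicator f)

/-- The scalar function `t ↦ ‖f t‖` as an element of `Lp(μ, ℝ)`. -/
noncomputable def normLp {Ω X : Type*} [MeasurableSpace Ω] {μ : Measure Ω}
    {p : ℝ≥0∞} [NormedAddCommGroup X] (f : Lp X p μ) : Lp ℝ p μ :=
  ((Lp.memLp f).norm).toLp (fun t => ‖f t‖)


open scoped Topology
set_option linter.unusedSectionVars false

theorem balancing_signs {F : Type*} [NormedAddCommGroup F] [NormedSpace ℝ F]
    [FiniteDimensional ℝ F] {N : ℕ} (v : Fin N → F) {δ : ℝ} (hδ : 0 ≤ δ)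
    (hv : ∀ i, ‖v i‖ ≤ δ) :
    ∃ e : Fin N → ℝ, (∀ i, e i = 1 ∨ e i = -1) ∧
      ‖∑ i, e i • v i‖ ≤ 2 * (Module.finrank ℝ F) * δ := by
  classical
  set n := Module.finrank ℝ F with hn
  set φ : (Fin N → ℝ) → ℝ := fun l => ∑ i, (l i) ^ 2 with hφ
  set K : Set (Fin N → ℝ) := {l | (∀ i, |l i| ≤ 1) ∧ ∑ i, l i • v i = 0} with hK
  have h0K : (0 : Fin N → ℝ) ∈ K := ⟨fun i => by norm_num, by simp⟩
  have hKc : IsCompact K := by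
    have hsub : K ⊆ Set.Icc (fun _ => (-1 : ℝ)) (fun _ => 1) := by
      intro l hl
      rw [Set.mem_Icc, Pi.le_def, Pi.le_def]
      constructor <;> intro i
      · linarith [(abs_le.1 (hl.1 i)).1]
      · linarith [(abs_le.1 (hl.1 i)).2]
    have h1 : IsClosed {l : Fin N → ℝ | ∀ i, |l i| ≤ 1} := by
      have : {l : Fin N → ℝ | ∀ i, |l i| ≤ 1} = ⋂ i, {l | |l i| ≤ 1} := by
        ext l; simp
      rw [this]
      exact isClosed_iInter fun i =>
        isClosed_le ((continuous_apply i).abs) continuous_const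
    have h2 : IsClosed {l : Fin N → ℝ | ∑ i, l i • v i = 0} :=
      isClosed_eq (continuous_finset_sum _ fun i _ =>
        (continuous_apply i).smul continuous_const) continuous_const
    exact (isCompact_Icc).of_isClosed_subset (h1.inter h2) hsub
  have hφc : Continuous φ := continuous_finset_sum _ fun i _ => (continuous_apply i).pow 2
  obtain ⟨l, hlK, hlmax⟩ := hKc.exists_isMaxOn ⟨0, h0K⟩ hφc.continuousOn
  set S : Finset (Fin N) := Finset.univ.filter (fun i => |l i| < 1) with hS
  have hmemS : ∀ i, i ∈ S ↔ |l i| < 1 := by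
    intro i; simp [hS]
  have hcard : S.card ≤ n := by
    by_contra hc
    push_neg at hc
    have hdep : ¬ LinearIndependent ℝ (fun i : S => v i) := by
      intro hli
      have := hli.fintype_card_le_finrank
      rw [Fintype.card_coe] at this
      omega
    obtain ⟨g, hgsum, i₀, hgi₀⟩ := Fintype.not_linearIndependent_iff.1 hdep
    set c : Fin N → ℝ := fun i => if h : i ∈ S then g ⟨i, h⟩ else 0 with hc_def
    have hcS : ∀ i ∉ S, c i = 0 := fun i hi => dif_neg hi
    have hcg : ∀ i : S, c i = g i := fun i => dif_pos i.2
    have hcsum : ∑ i, c i • v i = 0 := by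
      calc ∑ i, c i • v i = ∑ i ∈ S, c i • v i :=
            (Finset.sum_subset S.subset_univ
              (fun i _ hi => by rw [hcS i hi, zero_smul])).symm
        _ = ∑ i : S, c (i : Fin N) • v (i : Fin N) :=
            (Finset.sum_coe_sort S (fun i => c i • v i)).symm
        _ = ∑ i : S, g i • v (i : Fin N) := by
            refine Finset.sum_congr rfl fun i _ => by rw [hcg i]
        _ = 0 := hgsum
    have hSne : S.Nonempty := Finset.card_pos.1 (by omega)
    set t : ℝ := S.inf' hSne (fun i => (1 - |l i|) / (|c i| + 1)) with ht
    have htpos : 0 < t := by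
      rw [ht, Finset.lt_inf'_iff]
      intro i hi
      have h1i : |l i| < 1 := (hmemS i).1 hi
      have : 0 < 1 - |l i| := by linarith
      positivity
    have hcoord : ∀ a : ℝ, |a| ≤ t → ∀ i, |l i + a * c i| ≤ 1 := by
      intro a ha i
      by_cases hi : i ∈ S
      · have h1i : |l i| < 1 := (hmemS i).1 hi
        have hti : t ≤ (1 - |l i|) / (|c i| + 1) := Finset.inf'_le _ hi
        have hbound : |a * c i| ≤ 1 - |l i| := by
          rw [abs_mul]
          have h1 : |a| * |c i| ≤ ((1 - |l i|) / (|c i| + 1)) * |c i| :=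
            mul_le_mul (ha.trans hti) le_rfl (abs_nonneg _) (div_nonneg (by linarith) (by positivity))
          have h2 : ((1 - |l i|) / (|c i| + 1)) * |c i| ≤ 1 - |l i| := by
            rw [div_mul_eq_mul_div, div_le_iff₀ (by positivity)]
            nlinarith [abs_nonneg (c i)]
          linarith
        calc |l i + a * c i| ≤ |l i| + |a * c i| := abs_add_le _ _
          _ ≤ |l i| + (1 - |l i|) := by linarith
          _ = 1 := by ring
      · rw [hcS i hi, mul_zero, add_zero]; exact hlK.1 i
    set σ : ℝ := if 0 ≤ ∑ i, l i * c i then 1 else -1 with hσ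
    have hσabs : |σ * t| ≤ t := by
      rcases le_or_gt 0 (∑ i, l i * c i) with h | h
      · rw [hσ, if_pos h, one_mul, abs_of_pos htpos]
      · rw [hσ, if_neg (not_le.2 h), abs_mul, abs_neg, abs_one, one_mul,
          abs_of_pos htpos]
    set l' : Fin N → ℝ := fun i => l i + (σ * t) * c i with hl'
    have hl'K : l' ∈ K := by
      constructor
      · intro i; exact hcoord _ hσabs i
      · have : ∀ i, l' i • v i = l i • v i + (σ * t) • (c i • v i) := by
          intro i; rw [hl']; simp only []
          rw [add_smul, mul_smul]
        calc ∑ i, l' i • v i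
            = ∑ i, (l i • v i + (σ * t) • (c i • v i)) :=
              Finset.sum_congr rfl fun i _ => this i
          _ = (∑ i, l i • v i) + (σ * t) • (∑ i, c i • v i) := by
              rw [Finset.sum_add_distrib, Finset.smul_sum]
          _ = 0 := by rw [hlK.2, hcsum, smul_zero, add_zero]
    have hgt : φ l < φ l' := by
      have expand : ∀ i, (l' i) ^ 2
          = (l i) ^ 2 + (2 * (σ * t)) * (l i * c i) + (σ * t) ^ 2 * (c i) ^ 2 := by
        intro i; rw [hl']; ring
      have hφl' : φ l' = φ l + (2 * (σ * t)) * (∑ i, l i * c i)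
          + (σ * t) ^ 2 * (∑ i, (c i) ^ 2) := by
        rw [hφ]; simp only []
        rw [Finset.sum_congr rfl fun i _ => expand i]
        rw [Finset.sum_add_distrib, Finset.sum_add_distrib, ← Finset.mul_sum,
          ← Finset.mul_sum]
      have hpos2 : 0 < ∑ i, (c i) ^ 2 := by
        apply Finset.sum_pos' (fun i _ => sq_nonneg _)
        refine ⟨(i₀ : Fin N), Finset.mem_univ _, ?_⟩
        have hne : c (i₀ : Fin N) ≠ 0 := by rw [hcg i₀]; exact hgi₀
        rcases hne.lt_or_gt with h | h <;> nlinarith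
      have hσsum : 0 ≤ (2 * (σ * t)) * (∑ i, l i * c i) := by
        rcases le_or_gt 0 (∑ i, l i * c i) with h | h
        · rw [hσ, if_pos h]; nlinarith
        · rw [hσ, if_neg (not_le.2 h)]; nlinarith
      have hσt2 : 0 < (σ * t) ^ 2 := by
        rcases le_or_gt 0 (∑ i, l i * c i) with h | h
        · rw [hσ, if_pos h]; nlinarith
        · rw [hσ, if_neg (not_le.2 h)]; nlinarith
      nlinarith
    exact absurd (hlmax hl'K) (not_le.2 hgt)
  -- rounding
  set e : Fin N → ℝ := fun i => if 0 ≤ l i then 1 else -1 with he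
  have hepm : ∀ i, e i = 1 ∨ e i = -1 := by
    intro i; by_cases h : 0 ≤ l i
    · left; rw [he]; simp [h]
    · right; rw [he]; simp [h]
  refine ⟨e, hepm, ?_⟩
  have hsum : ∑ i, e i • v i = ∑ i, (e i - l i) • v i := by
    rw [Finset.sum_congr rfl (fun i _ => (sub_smul (e i) (l i) (v i)))]
    rw [Finset.sum_sub_distrib, hlK.2, sub_zero]
  have hterm0 : ∀ i ∉ S, (e i - l i) • v i = 0 := by
    intro i hi
    have habs : |l i| = 1 := le_antisymm (hlK.1 i) (not_lt.1 (fun h => hi ((hmemS i).2 h)))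
    rcases abs_eq (by norm_num : (0:ℝ) ≤ 1) |>.1 habs with h1 | h1
    · have : e i = 1 := by rw [he]; simp [h1.symm ▸ (by norm_num : (0:ℝ) ≤ 1)]
      rw [this, h1, sub_self, zero_smul]
    · have : e i = -1 := by
        rw [he]; simp only []
        rw [if_neg (by rw [h1]; norm_num)]
      rw [this, h1, sub_self, zero_smul]
  calc ‖∑ i, e i • v i‖ = ‖∑ i ∈ S, (e i - l i) • v i‖ := by
        rw [hsum, (Finset.sum_subset S.subset_univ (fun i _ hi => hterm0 i hi))]
    _ ≤ ∑ i ∈ S, ‖(e i - l i) • v i‖ := norm_sum_le _ _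
    _ ≤ ∑ _i ∈ S, 2 * δ := by
        refine Finset.sum_le_sum fun i _ => ?_
        rw [norm_smul]
        refine mul_le_mul ?_ (hv i) (norm_nonneg _) (by norm_num)
        have h1 : |e i| = 1 := by rcases hepm i with h | h <;> rw [h] <;> norm_num
        have h2 : |l i| ≤ 1 := hlK.1 i
        calc ‖e i - l i‖ = |e i - l i| := Real.norm_eq_abs _
          _ ≤ |e i| + |l i| := abs_sub _ _
          _ ≤ 2 := by rw [h1]; linarith
    _ = S.card * (2 * δ) := by rw [Finset.sum_const, nsmul_eq_mul]
    _ ≤ n * (2 * δ) := by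
        apply mul_le_mul_of_nonneg_right _ (by linarith)
        exact_mod_cast hcard
    _ = 2 * n * δ := by ring


section Partition
variable {Ω : Type*} [MeasurableSpace Ω] {μ : Measure Ω}

/-- From atomlessness: arbitrarily small positive pieces. -/
lemma exists_small_piece (hatom : MeasureAtomless μ) {A : Set Ω} (hA : MeasurableSet A)
    (h0 : 0 < μ A) (hfin : μ A ≠ ∞) {δ : ℝ≥0∞} (hδ : δ ≠ 0) :
    ∃ B, B ⊆ A ∧ MeasurableSet B ∧ 0 < μ B ∧ μ B ≤ δ := by
  have key : ∀ k : ℕ, ∃ B, B ⊆ A ∧ MeasurableSet B ∧ 0 < μ B ∧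
      μ B ≤ (2 : ℝ≥0∞)⁻¹ ^ k * μ A := by
    intro k
    induction k with
    | zero => exact ⟨A, subset_rfl, hA, h0, by simp⟩
    | succ k ih =>
      obtain ⟨B, hBA, hBm, hB0, hBle⟩ := ih
      have hpow1 : (2 : ℝ≥0∞)⁻¹ ^ k ≤ 1 :=
        pow_le_one' (by simp [ENNReal.inv_le_one]) k
      have hBfin : μ B ≠ ∞ := by
        refine ne_top_of_le_ne_top hfin (hBle.trans ?_)
        exact mul_le_of_le_one_left zero_le hpow1
      obtain ⟨C, hCB, hCm, hC0, hClt⟩ := hatom B hBm hB0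
      have hhalf : (2 : ℝ≥0∞)⁻¹ ^ (k + 1) * μ A = ((2 : ℝ≥0∞)⁻¹ ^ k * μ A) / 2 := by
        rw [pow_succ, ENNReal.div_eq_inv_mul]; ring
      have hdivle : μ B / 2 ≤ ((2 : ℝ≥0∞)⁻¹ ^ k * μ A) / 2 :=
        ENNReal.div_le_div_right hBle 2
      rcases le_or_gt (μ C) (μ B / 2) with h | h
      · exact ⟨C, hCB.trans hBA, hCm, hC0, by rw [hhalf]; exact h.trans hdivle⟩
      · refine ⟨B \ C, diff_subset.trans hBA, hBm.diff hCm, ?_, ?_⟩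
        · have hdiff : μ (B \ C) = μ B - μ C :=
            measure_diff hCB hCm.nullMeasurableSet (ne_top_of_le_ne_top hBfin hClt.le)
          rw [hdiff]
          exact tsub_pos_iff_lt.2 hClt
        · have hdiff : μ (B \ C) = μ B - μ C :=
            measure_diff hCB hCm.nullMeasurableSet (ne_top_of_le_ne_top hBfin hClt.le)
          rw [hdiff, hhalf]
          calc μ B - μ C ≤ μ B - μ B / 2 := tsub_le_tsub_left h.le _
            _ = μ B / 2 := ENNReal.sub_half hBfin
            _ ≤ _ := hdivle
  -- choose k with (2⁻¹)^k * μ A ≤ δ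
  have hne : δ / (μ A + 1) ≠ 0 := by
    rw [Ne, ENNReal.div_eq_zero_iff]
    push_neg
    exact ⟨hδ, by simp [hfin]⟩
  obtain ⟨k, hk⟩ := ENNReal.exists_inv_two_pow_lt hne
  obtain ⟨B, hBA, hBm, hB0, hBle⟩ := key k
  refine ⟨B, hBA, hBm, hB0, hBle.trans ?_⟩
  calc (2 : ℝ≥0∞)⁻¹ ^ k * μ A ≤ (δ / (μ A + 1)) * (μ A + 1) := by
        apply mul_le_mul' hk.le
        exact le_self_add
    _ = δ := ENNReal.div_mul_cancel (by simp) (by simp [hfin])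

/-- Partition of a finite-measure set into finitely many pieces of measure at most δ. -/
lemma exists_partition (hatom : MeasureAtomless μ) {E : Set Ω} (hE : MeasurableSet E)
    (hEfin : μ E ≠ ∞) {δ : ℝ≥0∞} (hδ0 : δ ≠ 0) (hδtop : δ ≠ ∞) :
    ∃ (N : ℕ) (Q : Fin N → Set Ω), (∀ i, MeasurableSet (Q i)) ∧ (∀ i, Q i ⊆ E) ∧
      Pairwise (Function.onFun Disjoint Q) ∧ (⋃ i, Q i) = E ∧ ∀ i, μ (Q i) ≤ δ := by
  classical
  set 𝒮 : Set Ω → Set ℝ≥0∞ :=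
    fun R => {m | ∃ B, B ⊆ R ∧ MeasurableSet B ∧ μ B ≤ δ ∧ μ B = m} with h𝒮
  have hstep : ∀ R : Set Ω, ∃ B, B ⊆ R ∧ MeasurableSet B ∧ μ B ≤ δ ∧
      sSup (𝒮 R) ≤ 2 * μ B := by
    intro R
    rcases eq_or_ne (sSup (𝒮 R)) 0 with h0 | h0
    · exact ⟨∅, empty_subset R, MeasurableSet.empty, by simp, by simp [h0]⟩
    · have hsup_le : sSup (𝒮 R) ≤ δ := by
        apply sSup_le
        rintro m ⟨B, -, -, hBδ, rfl⟩
        exact hBδ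
      have hne : sSup (𝒮 R) ≠ ∞ := ne_top_of_le_ne_top hδtop hsup_le
      have hhalf : sSup (𝒮 R) / 2 < sSup (𝒮 R) := ENNReal.half_lt_self h0 hne
      obtain ⟨m, hm𝒮, hm⟩ := lt_sSup_iff.1 hhalf
      obtain ⟨B, hBR, hBm, hBδ, rfl⟩ := hm𝒮
      refine ⟨B, hBR, hBm, hBδ, ?_⟩
      calc sSup (𝒮 R) = 2 * (sSup (𝒮 R) / 2) :=
            (ENNReal.mul_div_cancel' (by norm_num) (by norm_num)).symm
        _ ≤ 2 * μ B := mul_le_mul_right hm.le 2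
  choose nxt hsub hmeas hle hsup using hstep
  set R : ℕ → Set Ω := fun n => Nat.rec E (fun _ S => S \ nxt S) n with hR
  have hRsucc : ∀ n, R (n + 1) = R n \ nxt (R n) := fun n => rfl
  set B : ℕ → Set Ω := fun n => nxt (R n) with hB
  have hRmeas : ∀ n, MeasurableSet (R n) := by
    intro n
    induction n with
    | zero => exact hE
    | succ n ih => exact ih.diff (hmeas _)
  have hRanti : Antitone R := by
    apply antitone_nat_of_succ_le
    intro n
    rw [hRsucc]
    exact diff_subset
  have hRsubE : ∀ n, R n ⊆ E := fun n => hRanti (Nat.zero_le n)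
  have hBsubR : ∀ n, B n ⊆ R n := fun n => hsub (R n)
  have hBsubE : ∀ n, B n ⊆ E := fun n => (hBsubR n).trans (hRsubE n)
  have hkey : ∀ m n, m < n → Disjoint (B m) (R n) := by
    intro m n h
    have h1 : R n ⊆ R m \ B m := by
      rw [← hRsucc]
      exact hRanti h
    exact (Set.disjoint_sdiff_right.mono_right h1)
  have hBdisj : Pairwise (Function.onFun Disjoint B) := by
    intro i j hij
    rcases lt_or_gt_of_ne hij with h | h
    · exact (hkey i j h).mono_right (hBsubR j)
    · exact ((hkey j i h).mono_right (hBsubR i)).symm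
  have hRdiff : ∀ n, R n = E \ ⋃ (k : ℕ) (_ : k < n), B k := by
    intro n
    induction n with
    | zero => rw [show R 0 = E from rfl]; simp
    | succ n ih =>
      rw [hRsucc]
      change R n \ B n = _
      rw [ih, Set.diff_diff]
      congr 1
      ext x
      simp only [Set.mem_union, Set.mem_iUnion, exists_prop]
      constructor
      · rintro (⟨k, hk, hx⟩ | hx)
        · exact ⟨k, hk.trans (Nat.lt_succ_self n), hx⟩
        · exact ⟨n, Nat.lt_succ_self n, hx⟩
      · rintro ⟨k, hk, hx⟩
        rcases Nat.lt_succ_iff_lt_or_eq.1 hk with h | rfl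
        · exact Or.inl ⟨k, h, hx⟩
        · exact Or.inr hx
  have htsum : ∑' n, μ (B n) ≤ μ E := by
    rw [← measure_iUnion hBdisj (fun n => hmeas (R n))]
    exact measure_mono (Set.iUnion_subset hBsubE)
  have hBtend : Tendsto (fun n => μ (B n)) atTop (𝓝 0) :=
    ENNReal.tendsto_atTop_zero_of_tsum_ne_top (ne_top_of_le_ne_top hEfin htsum)
  have hmain : ∃ n, μ (R n) ≤ δ := by
    by_contra hcon
    push_neg at hcon
    have hRinf_meas : MeasurableSet (⋂ n, R n) := MeasurableSet.iInter fun n => hRmeas n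
    have hμinf : Tendsto (fun n => μ (R n)) atTop (𝓝 (μ (⋂ n, R n))) :=
      tendsto_measure_iInter_atTop (fun n => (hRmeas n).nullMeasurableSet) hRanti
        ⟨0, by exact ne_top_of_le_ne_top hEfin (measure_mono (hRsubE 0))⟩
    have h1 : δ ≤ μ (⋂ n, R n) :=
      ge_of_tendsto hμinf (Eventually.of_forall fun n => (hcon n).le)
    have hpos : 0 < μ (⋂ n, R n) := lt_of_lt_of_le (pos_iff_ne_zero.2 hδ0) h1
    have hfin' : μ (⋂ n, R n) ≠ ∞ :=
      ne_top_of_le_ne_top hEfin (measure_mono ((Set.iInter_subset _ 0).trans (hRsubE 0)))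
    obtain ⟨C, hCsub, hCm, hC0, hCδ⟩ := exists_small_piece hatom hRinf_meas hpos hfin' hδ0
    have hCfin : μ C ≠ ∞ := ne_top_of_le_ne_top hδtop hCδ
    have hCn : ∀ n, μ C ≤ 2 * μ (B n) := by
      intro n
      refine (le_sSup ?_).trans (hsup (R n))
      exact ⟨C, hCsub.trans (Set.iInter_subset _ n), hCm, hCδ, rfl⟩
    have hhalfpos : 0 < μ C / 2 := ENNReal.half_pos hC0.ne'
    have hev : ∀ᶠ n in atTop, μ (B n) ∈ Iio (μ C / 2) := hBtend (Iio_mem_nhds hhalfpos)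
    obtain ⟨n, hn⟩ := hev.exists
    have hlt : μ C < μ C := by
      calc μ C ≤ 2 * μ (B n) := hCn n
        _ < 2 * (μ C / 2) :=
            (ENNReal.mul_lt_mul_iff_right (by norm_num) (by norm_num)).2 (Set.mem_Iio.1 hn)
        _ = μ C := ENNReal.mul_div_cancel' (by norm_num) (by norm_num)
    exact lt_irrefl _ hlt
  obtain ⟨n₀, hn₀⟩ := hmain
  refine ⟨n₀ + 1, fun i => if h : (i : ℕ) < n₀ then B i else R n₀, ?_, ?_, ?_, ?_, ?_⟩
  · intro i
    by_cases h : (i : ℕ) < n₀ <;> simp only [h, dif_pos, dif_neg, not_false_iff]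
    · exact hmeas _
    · exact hRmeas n₀
  · intro i
    by_cases h : (i : ℕ) < n₀ <;> simp only [h, dif_pos, dif_neg, not_false_iff]
    · exact hBsubE _
    · exact hRsubE n₀
  · intro i j hij
    have hvij : (i : ℕ) ≠ (j : ℕ) := fun hh => hij (Fin.ext hh)
    unfold Function.onFun
    by_cases hi : (i : ℕ) < n₀ <;> by_cases hj : (j : ℕ) < n₀ <;>
      simp only [hi, hj, dif_pos, dif_neg, not_false_iff]
    · exact hBdisj hvij
    · exact hkey i n₀ hi
    · exact (hkey j n₀ hj).symm
    · exfalso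
      apply hvij
      have hi' : (i : ℕ) = n₀ := Nat.le_antisymm (Nat.lt_succ_iff.1 i.isLt) (not_lt.1 hi)
      have hj' : (j : ℕ) = n₀ := Nat.le_antisymm (Nat.lt_succ_iff.1 j.isLt) (not_lt.1 hj)
      rw [hi', hj']
  · ext x
    simp only [Set.mem_iUnion]
    constructor
    · rintro ⟨i, hx⟩
      by_cases h : (i : ℕ) < n₀
      · rw [dif_pos h] at hx
        exact hBsubE _ hx
      · rw [dif_neg h] at hx
        exact hRsubE n₀ hx
    · intro hx
      by_cases h : x ∈ R n₀
      · refine ⟨⟨n₀, Nat.lt_succ_self n₀⟩, ?_⟩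
        rw [dif_neg (lt_irrefl n₀)]
        exact h
      · rw [hRdiff n₀] at h
        have : x ∈ ⋃ (k : ℕ) (_ : k < n₀), B k := by
          by_contra hc
          exact h ⟨hx, hc⟩
        simp only [Set.mem_iUnion, exists_prop] at this
        obtain ⟨k, hk, hxk⟩ := this
        refine ⟨⟨k, hk.trans (Nat.lt_succ_self n₀)⟩, ?_⟩
        rw [dif_pos hk]
        exact hxk
  · intro i
    by_cases h : (i : ℕ) < n₀ <;> simp only [h, dif_pos, dif_neg, not_false_iff]
    · exact hle _
    · exact hn₀
end Partition

section Glue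
variable {Ω X : Type*} [MeasurableSpace Ω] {μ : Measure Ω} {p : ℝ≥0∞}
  [NormedAddCommGroup X]

lemma restrictLp_coeFn (f : Lp X p μ) {A : Set Ω} (hA : MeasurableSet A) :
    restrictLp f hA =ᵐ[μ] A.indicator f := MemLp.coeFn_toLp _

lemma norm_restrictLp (f : Lp X p μ) {A : Set Ω} (hA : MeasurableSet A) :
    ‖restrictLp f hA‖ = (eLpNorm (A.indicator ⇑f) p μ).toReal := Lp.norm_toLp _ _

lemma coeFn_finset_sum {ι : Type*} (s : Finset ι) (g : ι → Lp X p μ) :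
    ⇑(∑ i ∈ s, g i) =ᵐ[μ] fun x => ∑ i ∈ s, g i x := by
  classical
  induction s using Finset.induction with
  | empty => simp only [Finset.sum_empty]; exact Lp.coeFn_zero X p μ
  | @insert a s ha ih =>
    rw [Finset.sum_insert ha]
    filter_upwards [Lp.coeFn_add (g a) (∑ i ∈ s, g i), ih] with x h1 h2
    simp only [Finset.sum_insert ha, h1, Pi.add_apply, h2]

lemma indicator_biUnion_eq_sum {ι Y : Type*} [AddCommMonoid Y] {B : ι → Set Ω}
    (hdisj : Pairwise (Function.onFun Disjoint B)) (s : Finset ι) (u : Ω → Y) (x : Ω) :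
    (⋃ i ∈ s, B i).indicator u x = ∑ i ∈ s, (B i).indicator u x := by
  classical
  by_cases hx : x ∈ ⋃ i ∈ s, B i
  · obtain ⟨i, his, hxi⟩ := Set.mem_iUnion₂.1 hx
    rw [Set.indicator_of_mem hx, Finset.sum_eq_single_of_mem i his]
    · rw [Set.indicator_of_mem hxi]
    · intro j hjs hji
      apply Set.indicator_of_notMem
      intro hxj
      exact Set.disjoint_left.1 (hdisj hji) hxj hxi
  · rw [Set.indicator_of_notMem hx]
    symm
    apply Finset.sum_eq_zero
    intro j hjs
    apply Set.indicator_of_notMem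
    intro hxj
    exact hx (Set.mem_iUnion₂.2 ⟨j, hjs, hxj⟩)

lemma restrictLp_sum {ι : Type*} {B : ι → Set Ω} (hB : ∀ i, MeasurableSet (B i))
    (hdisj : Pairwise (Function.onFun Disjoint B)) (s : Finset ι) (f : Lp X p μ)
    {U : Set Ω} (hUeq : U = ⋃ i ∈ s, B i) (hU : MeasurableSet U) :
    restrictLp f hU = ∑ i ∈ s, restrictLp f (hB i) := by
  apply Lp.ext
  have hterm : ∀ᵐ x ∂μ, ∀ i ∈ s, (restrictLp f (hB i)) x = (B i).indicator f x :=
    (eventually_all_finset s).2 (fun i _ => restrictLp_coeFn f (hB i))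
  filter_upwards [restrictLp_coeFn f hU,
    coeFn_finset_sum s (fun i => restrictLp f (hB i)), hterm] with x h1 h2 h3
  rw [h1, h2, hUeq, indicator_biUnion_eq_sum hdisj s (⇑f) x]
  exact (Finset.sum_congr rfl (fun i hi => (h3 i hi))).symm

end Glue

/-- Every norm-continuous linear operator from the Bochner space `Lp(μ, X)` over a
σ-finite atomless measure to a finite dimensional normed space `F` is narrow:
every `f` admits, for every `ε > 0`, a measurable set `A` with
`‖T (1_A f) - T (1_{Ω∖A} f)‖ < ε`. -/
theorem narrow_of_continuous_Lp_to_finiteDimensional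
    {Ω X F : Type*} [MeasurableSpace Ω] (μ : Measure Ω) [SigmaFinite μ]
    [NormedAddCommGroup X] [NormedSpace ℝ X] [CompleteSpace X]
    [NormedAddCommGroup F] [NormedSpace ℝ F] [FiniteDimensional ℝ F]
    {p : ℝ≥0∞} [Fact (1 ≤ p)] (hp : p ≠ ∞)
    (hatomless : MeasureAtomless μ)
    (T : Lp X p μ →L[ℝ] F) :
    ∀ f : Lp X p μ, ∀ ε : ℝ, 0 < ε →
      ∃ (A : Set Ω) (hA : MeasurableSet A),
        ‖T (restrictLp f hA) - T (restrictLp f hA.compl)‖ < ε := by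
  classical
  intro f ε hε
  set n := Module.finrank ℝ F with hn
  set θ : ℝ := ε / (2 * (n : ℝ) * ‖T‖ + 1) with hθ
  have hθpos : 0 < θ := div_pos hε (by positivity)
  -- finite measure core
  obtain ⟨S, hS, hSfin, hScompl⟩ :=
    (Lp.memLp f).exists_eLpNorm_indicator_compl_lt hp
      (ε := ENNReal.ofReal θ) (ENNReal.ofReal_pos.2 hθpos).ne'
  -- uniform integrability threshold
  obtain ⟨δ₁, hδ₁pos, hδ₁⟩ := (Lp.memLp f).eLpNorm_indicator_le Fact.out hp hθpos
  -- partition the core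
  obtain ⟨N, Q, hQmeas, hQsub, hQdisj, hQunion, hQsmall⟩ :=
    exists_partition hatomless hS hSfin.ne
      (δ := ENNReal.ofReal δ₁) (ENNReal.ofReal_pos.2 hδ₁pos).ne' ENNReal.ofReal_ne_top
  -- full partition of Ω
  set P : Fin (N + 1) → Set Ω := Fin.cons Sᶜ Q with hP
  have hP0 : P 0 = Sᶜ := rfl
  have hPsucc : ∀ j : Fin N, P j.succ = Q j := fun j => Fin.cons_succ _ _ j
  have mP : ∀ i, MeasurableSet (P i) := by
    intro i
    rcases Fin.eq_zero_or_eq_succ i with rfl | ⟨j, rfl⟩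
    · rw [hP0]; exact hS.compl
    · rw [hPsucc]; exact hQmeas j
  have hcover : ∀ x, ∃ i, x ∈ P i := by
    intro x
    by_cases hx : x ∈ S
    · rw [← hQunion] at hx
      obtain ⟨j, hj⟩ := Set.mem_iUnion.1 hx
      exact ⟨j.succ, by rw [hPsucc]; exact hj⟩
    · exact ⟨0, by rw [hP0]; exact hx⟩
  have hPdisj : Pairwise (Function.onFun Disjoint P) := by
    have hd0 : ∀ j : Fin N, Disjoint (P 0) (P j.succ) := by
      intro j
      rw [hP0, hPsucc]
      exact disjoint_compl_left.mono_right (hQsub j)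
    intro i j hij
    unfold Function.onFun
    rcases Fin.eq_zero_or_eq_succ i with rfl | ⟨i', rfl⟩ <;>
      rcases Fin.eq_zero_or_eq_succ j with rfl | ⟨j', rfl⟩
    · exact absurd rfl hij
    · exact hd0 j'
    · exact (hd0 i').symm
    · rw [hPsucc, hPsucc]
      exact hQdisj (fun h => hij (by rw [h]))
  -- norms of the pieces
  have hnorm : ∀ i, ‖restrictLp f (mP i)‖ ≤ θ := by
    intro i
    rw [norm_restrictLp]
    rcases Fin.eq_zero_or_eq_succ i with rfl | ⟨j, rfl⟩
    · rw [hP0]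
      exact ENNReal.toReal_le_of_le_ofReal hθpos.le hScompl.le
    · rw [hPsucc]
      exact ENNReal.toReal_le_of_le_ofReal hθpos.le (hδ₁ (Q j) (hQmeas j) (hQsmall j))
  -- balancing
  have hTθ : (0 : ℝ) ≤ ‖T‖ * θ := by positivity
  obtain ⟨sgn, hsgn, hbal⟩ := balancing_signs (fun i => T (restrictLp f (mP i))) hTθ
    (fun i => (T.le_opNorm _).trans (mul_le_mul_of_nonneg_left (hnorm i) (norm_nonneg T)))
  -- the set A
  set s : Finset (Fin (N + 1)) := Finset.univ.filter (fun i => sgn i = 1) with hs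
  have hA : MeasurableSet (⋃ i ∈ s, P i) := s.measurableSet_biUnion (fun i _ => mP i)
  have hAc : (⋃ i ∈ s, P i)ᶜ = ⋃ i ∈ sᶜ, P i := by
    ext x
    simp only [Set.mem_compl_iff, Set.mem_iUnion, exists_prop, Finset.mem_compl]
    constructor
    · intro hx
      obtain ⟨j, hj⟩ := hcover x
      refine ⟨j, fun hjs => hx ⟨j, hjs, hj⟩, hj⟩
    · rintro ⟨j, hjs, hj⟩ ⟨i, his, hxi⟩
      exact Set.disjoint_left.1 (hPdisj (fun h : i = j => hjs (h ▸ his))) hxi hj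
  refine ⟨⋃ i ∈ s, P i, hA, ?_⟩
  have h1 : restrictLp f hA = ∑ i ∈ s, restrictLp f (mP i) :=
    restrictLp_sum mP hPdisj s f rfl hA
  have h2 : restrictLp f hA.compl = ∑ i ∈ sᶜ, restrictLp f (mP i) :=
    restrictLp_sum mP hPdisj sᶜ f hAc hA.compl
  rw [h1, h2, map_sum, map_sum]
  have e1 : ∑ i ∈ s, T (restrictLp f (mP i)) = ∑ i ∈ s, sgn i • T (restrictLp f (mP i)) :=
    Finset.sum_congr rfl (fun i hi => by
      rw [(Finset.mem_filter.1 hi).2, one_smul])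
  have e2 : ∑ i ∈ sᶜ, T (restrictLp f (mP i))
      = - ∑ i ∈ sᶜ, sgn i • T (restrictLp f (mP i)) := by
    rw [← Finset.sum_neg_distrib]
    refine Finset.sum_congr rfl (fun i hi => ?_)
    have hnot : ¬ sgn i = 1 := by
      have := Finset.mem_compl.1 hi
      simpa [hs] using this
    rcases hsgn i with h | h
    · exact absurd h hnot
    · rw [h, neg_smul, one_smul, neg_neg]
  have hsplit : (∑ i ∈ s, T (restrictLp f (mP i))) - (∑ i ∈ sᶜ, T (restrictLp f (mP i)))
      = ∑ i, sgn i • T (restrictLp f (mP i)) := by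
    rw [e1, e2, sub_neg_eq_add, Finset.sum_add_sum_compl]
  rw [hsplit]
  refine lt_of_le_of_lt hbal ?_
  have hD : (0 : ℝ) < 2 * (n : ℝ) * ‖T‖ + 1 := by positivity
  calc 2 * (n : ℝ) * (‖T‖ * θ) = (2 * (n : ℝ) * ‖T‖) * ε / (2 * (n : ℝ) * ‖T‖ + 1) := by
        rw [hθ]; ring
    _ < ε := by
        rw [div_lt_iff₀ hD]
        linarith
end

section
/- Let E be a vector lattice, u ∈ E, and let e₁, …, eₙ ∈ E be pairwise disjoint positive elements with |u| = e₁ + … + eₙ. Then there exist pairwise disjoint u₁, …, uₙ ∈ E with u = u₁ + … + uₙ and |uᵢ| = eᵢ for every i = 1, …, n. -/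
section Aux
variable {E : Type*} [Lattice E] [AddCommGroup E]
  [CovariantClass E E (· + ·) (· ≤ ·)]

lemma my_sum_nonneg {ι : Type*} {s : Finset ι} {f : ι → E} (hf : ∀ i ∈ s, 0 ≤ f i) :
    0 ≤ ∑ i ∈ s, f i := by
  induction s using Finset.cons_induction with
  | empty => simp
  | cons j t hj ih =>
    rw [Finset.sum_cons]
    exact add_nonneg (hf j (Finset.mem_cons_self j t))
      (ih fun i hi => hf i (Finset.mem_cons_of_mem hi))

/-- Riesz decomposition inequality. -/
lemma riesz_inf_add {a b c : E} (ha : 0 ≤ a) (hb : 0 ≤ b) (hc : 0 ≤ c) :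
    a ⊓ (b + c) ≤ a ⊓ b + a ⊓ c := by
  rw [← sub_le_iff_le_add', sub_inf]
  apply sup_le
  · exact le_trans (sub_nonpos.2 inf_le_left) (le_inf ha hc)
  · exact le_inf (le_trans (sub_le_self _ hb) inf_le_left)
      (sub_le_iff_le_add'.2 inf_le_right)

lemma riesz_inf_sum {ι : Type*} (s : Finset ι) (f : ι → E) {a : E} (ha : 0 ≤ a)
    (hf : ∀ i ∈ s, 0 ≤ f i) : a ⊓ ∑ i ∈ s, f i ≤ ∑ i ∈ s, a ⊓ f i := by
  induction s using Finset.cons_induction with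
  | empty => simp
  | cons j s hj ih =>
    rw [Finset.sum_cons, Finset.sum_cons]
    calc a ⊓ (f j + ∑ i ∈ s, f i)
        ≤ a ⊓ f j + a ⊓ ∑ i ∈ s, f i :=
          riesz_inf_add ha (hf j (Finset.mem_cons_self j s))
            (my_sum_nonneg fun i hi => hf i (Finset.mem_cons_of_mem hi))
      _ ≤ a ⊓ f j + ∑ i ∈ s, a ⊓ f i := by
          exact add_le_add le_rfl (ih fun i hi => hf i (Finset.mem_cons_of_mem hi))

/-- a sum of pairwise disjoint nonnegative elements each bounded by `x` is bounded by `x`. -/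
lemma sum_disjoint_le {ι : Type*} (s : Finset ι) (f : ι → E) {x : E} (hx : 0 ≤ x)
    (hf : ∀ i ∈ s, 0 ≤ f i) (hd : ∀ i ∈ s, ∀ j ∈ s, i ≠ j → f i ⊓ f j = 0)
    (hle : ∀ i ∈ s, f i ≤ x) : ∑ i ∈ s, f i ≤ x := by
  induction s using Finset.cons_induction with
  | empty => simpa using hx
  | cons j s hnotmem ih =>
    rw [Finset.sum_cons]
    have hs : ∀ i ∈ s, 0 ≤ f i := fun i hi => hf i (Finset.mem_cons_of_mem hi)
    have hsum0 : f j ⊓ ∑ i ∈ s, f i = 0 := by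
      have h1 : f j ⊓ ∑ i ∈ s, f i ≤ ∑ i ∈ s, f j ⊓ f i :=
        riesz_inf_sum s f (hf j (Finset.mem_cons_self j s)) hs
      have h2 : ∑ i ∈ s, f j ⊓ f i = 0 := by
        apply Finset.sum_eq_zero
        intro i hi
        exact hd j (Finset.mem_cons_self j s) i (Finset.mem_cons_of_mem hi)
          (fun h => hnotmem (h ▸ hi))
      refine le_antisymm (h1.trans h2.le) ?_
      exact le_inf (hf j (Finset.mem_cons_self j s)) (my_sum_nonneg hs)
    have hsup : f j + ∑ i ∈ s, f i = f j ⊔ ∑ i ∈ s, f i := by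
      rw [← inf_add_sup, hsum0, zero_add]
    rw [hsup]
    refine sup_le (hle j (Finset.mem_cons_self j s)) ?_
    exact ih hs (fun i hi k hk => hd i (Finset.mem_cons_of_mem hi) k
      (Finset.mem_cons_of_mem hk)) (fun i hi => hle i (Finset.mem_cons_of_mem hi))

/-- modulus of a difference of disjoint nonnegative elements. -/
lemma abs_sub_of_disjoint {a b : E} (ha : 0 ≤ a) (hb : 0 ≤ b) (hab : a ⊓ b = 0) :
    |a - b| = a + b := by
  have hsup : a ⊔ b = a + b := by rw [← inf_add_sup, hab, zero_add]
  have hpos : (a - b)⁺ = a := by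
    rw [posPart_def, show (0:E) = b - b by simp, ← sup_sub, hsup]; abel
  have hneg : (a - b)⁻ = b := by
    rw [negPart_def, neg_sub, show (0:E) = a - a by simp, ← sup_sub, sup_comm, hsup]; abel
  rw [← posPart_add_negPart (a - b), hpos, hneg]

end Aux

/-- Decomposability of the modulus in a vector lattice: if `|u| = e₁ + ⋯ + eₙ`
with `e₁, …, eₙ` pairwise disjoint positive elements, then `u = u₁ + ⋯ + uₙ` for
some pairwise disjoint `u₁, …, uₙ` with `|uᵢ| = eᵢ` for every `i`. -/
theorem exists_disjoint_decomposition_of_abs_eq_sum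
    {E : Type*} [Lattice E] [AddCommGroup E] [Module ℝ E]
    [CovariantClass E E (· + ·) (· ≤ ·)] [PosSMulMono ℝ E]
    (u : E) {n : ℕ} (e : Fin n → E)
    (hpos : ∀ i : Fin n, 0 ≤ e i)
    (hdisj : ∀ i j : Fin n, i ≠ j → e i ⊓ e j = 0)
    (hsum : |u| = ∑ i, e i) :
    ∃ w : Fin n → E,
      (∀ i j : Fin n, i ≠ j → |w i| ⊓ |w j| = 0) ∧
      u = ∑ i, w i ∧ ∀ i : Fin n, |w i| = e i := by
  set a : Fin n → E := fun i => u⁺ ⊓ e i with ha_def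
  set b : Fin n → E := fun i => u⁻ ⊓ e i with hb_def
  have hap : ∀ i, 0 ≤ a i := fun i => le_inf (posPart_nonneg u) (hpos i)
  have hbp : ∀ i, 0 ≤ b i := fun i => le_inf (negPart_nonneg u) (hpos i)
  have hab : ∀ i, a i ⊓ b i = 0 := by
    intro i
    refine le_antisymm ?_ (le_inf (hap i) (hbp i))
    calc a i ⊓ b i ≤ u⁺ ⊓ u⁻ := inf_le_inf inf_le_left inf_le_left
      _ = 0 := posPart_inf_negPart_eq_zero u
  -- a i + b i = e i
  have key : ∀ i, a i + b i = e i := by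
    intro i
    have hsup : a i ⊔ b i = a i + b i := by rw [← inf_add_sup, hab i, zero_add]
    refine le_antisymm ?_ ?_
    · rw [← hsup]; exact sup_le inf_le_right inf_le_right
    · have h1 : e i ≤ |u| := by
        rw [hsum, ← Finset.add_sum_erase _ e (Finset.mem_univ i)]
        exact le_add_of_nonneg_right (my_sum_nonneg fun j _ => hpos j)
      have h2 : e i = e i ⊓ (u⁺ + u⁻) := by
        rw [posPart_add_negPart]
        exact (inf_eq_left.2 h1).symm
      calc e i = e i ⊓ (u⁺ + u⁻) := h2
        _ ≤ e i ⊓ u⁺ + e i ⊓ u⁻ :=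
            riesz_inf_add (hpos i) (posPart_nonneg u) (negPart_nonneg u)
        _ = a i + b i := by rw [inf_comm (e i) u⁺, inf_comm (e i) u⁻]
  have habs : ∀ i, |a i - b i| = e i := fun i =>
    (abs_sub_of_disjoint (hap i) (hbp i) (hab i)).trans (key i)
  -- sums
  have hda : ∀ i j : Fin n, i ≠ j → a i ⊓ a j = 0 := by
    intro i j hij
    refine le_antisymm ?_ (le_inf (hap i) (hap j))
    calc a i ⊓ a j ≤ e i ⊓ e j := inf_le_inf inf_le_right inf_le_right
      _ = 0 := hdisj i j hij
  have hdb : ∀ i j : Fin n, i ≠ j → b i ⊓ b j = 0 := by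
    intro i j hij
    refine le_antisymm ?_ (le_inf (hbp i) (hbp j))
    calc b i ⊓ b j ≤ e i ⊓ e j := inf_le_inf inf_le_right inf_le_right
      _ = 0 := hdisj i j hij
  have hsum_a : ∑ i, a i = u⁺ := by
    refine le_antisymm ?_ ?_
    · exact sum_disjoint_le _ _ (posPart_nonneg u) (fun i _ => hap i)
        (fun i _ j _ hij => hda i j hij) (fun i _ => inf_le_left)
    · have h1 : u⁺ ≤ |u| := by
        rw [← posPart_add_negPart u]
        exact le_add_of_nonneg_right (negPart_nonneg u)
      calc u⁺ = u⁺ ⊓ ∑ i, e i := by rw [← hsum]; exact (inf_eq_left.2 h1).symm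
        _ ≤ ∑ i, u⁺ ⊓ e i :=
            riesz_inf_sum _ _ (posPart_nonneg u) (fun i _ => hpos i)
        _ = ∑ i, a i := rfl
  have hsum_b : ∑ i, b i = u⁻ := by
    refine le_antisymm ?_ ?_
    · exact sum_disjoint_le _ _ (negPart_nonneg u) (fun i _ => hbp i)
        (fun i _ j _ hij => hdb i j hij) (fun i _ => inf_le_left)
    · have h1 : u⁻ ≤ |u| := by
        rw [← posPart_add_negPart u]
        exact le_add_of_nonneg_left (posPart_nonneg u)
      calc u⁻ = u⁻ ⊓ ∑ i, e i := by rw [← hsum]; exact (inf_eq_left.2 h1).symm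
        _ ≤ ∑ i, u⁻ ⊓ e i :=
            riesz_inf_sum _ _ (negPart_nonneg u) (fun i _ => hpos i)
        _ = ∑ i, b i := rfl
  refine ⟨fun i => a i - b i, ?_, ?_, habs⟩
  · intro i j hij
    rw [habs i, habs j]
    exact hdisj i j hij
  · rw [Finset.sum_sub_distrib, hsum_a, hsum_b, posPart_sub_negPart]
end
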